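/- arXiv:1206.6812 — 4 statements merged into one kernel-verified Lean document; each statement's English description precedes it below -/
import Mathlib

section
/- Stirling approximation for the two-parameter Poisson–Dirichlet EPPF weights: let α ∈ (0,1), θ > -α, s > 0, and set k_n = ⌈s·n^α⌉. Then, as n → ∞, the ratio of (θ+α)_{(k_n-1)↑α} / (θ+1)_{n-1} to (α^(k_n-1) · Γ(k_n) / Γ(n)) · (Γ(θ+1)/Γ(θ/α+1)) · (k_n / n^α)^(θ/α) tends to 1. -/
/-- Rising factorial `(x)_n = x(x+1)⋯(x+n-1)`, with `(x)_0 = 1`. -/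
noncomputable def risingFactorial (x : ℝ) (n : ℕ) : ℝ :=
  ∏ i ∈ Finset.range n, (x + i)

/-- Generalized rising factorial `(x)_{k↑α} = x(x+α)(x+2α)⋯(x+(k-1)α)`, with `(x)_{0↑α} = 1`. -/
noncomputable def genRisingFactorial (x α : ℝ) (k : ℕ) : ℝ :=
  ∏ i ∈ Finset.range k, (x + i * α)

open Filter Real Topology in
private lemma gamma_add_nat' (x : ℝ) (hx : 0 < x) (m : ℕ) :
    Real.Gamma (x + m) = Real.Gamma x * ∏ i ∈ Finset.range m, (x + i) := by
  induction m with
  | zero => simp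
  | succ n ih =>
    have h : x + ((n : ℕ) + 1 : ℕ) = (x + n) + 1 := by push_cast; ring
    rw [h, Real.Gamma_add_one (by positivity), ih, Finset.prod_range_succ]
    ring

open Filter Real Topology in
private lemma key_gamma_ratio (a : ℝ) (ha : -1 < a) :
    Tendsto (fun m : ℕ => Real.Gamma (m + a) / (Real.Gamma m * (m : ℝ) ^ a))
      atTop (𝓝 1) := by
  set b : ℝ := a + 1 with hb
  have hb0 : 0 < b := by linarith
  have hΓb : 0 < Real.Gamma b := Real.Gamma_pos_of_pos hb0
  have hG := Real.GammaSeq_tendsto_Gamma b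
  have h1 : Tendsto (fun n : ℕ => Real.Gamma b / Real.GammaSeq b n) atTop (𝓝 1) := by
    have := (tendsto_const_nhds (x := Real.Gamma b) (f := atTop)).div hG hΓb.ne'
    rw [div_self hΓb.ne'] at this
    exact this
  have h2 : Tendsto (fun n : ℕ => (n : ℝ) / ((n : ℝ) + b)) atTop (𝓝 1) :=
    tendsto_natCast_div_add_atTop b
  have h3 : Tendsto (fun n : ℕ => ((n : ℝ) / ((n : ℝ) + 1)) ^ a) atTop (𝓝 1) := by
    have := (tendsto_natCast_div_add_atTop (1 : ℝ)).rpow_const (p := a) (Or.inl one_ne_zero)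
    simpa using this
  have hcomb := (h1.mul h2).mul h3
  rw [show (1 : ℝ) * 1 * 1 = 1 by ring] at hcomb
  rw [← Filter.tendsto_add_atTop_iff_nat 1]
  refine hcomb.congr' ?_
  filter_upwards [eventually_ge_atTop 1] with n hn
  have hn0 : (0 : ℝ) < n := by exact_mod_cast hn
  have hfact : (0 : ℝ) < (n.factorial : ℝ) := by positivity
  have hprodpos : (0 : ℝ) < ∏ j ∈ Finset.range (n + 1), (b + j) := by
    apply Finset.prod_pos; intro j _; positivity
  have hGS : Real.GammaSeq b n =
      (n : ℝ) ^ b * n.factorial / ∏ j ∈ Finset.range (n + 1), (b + j) := rfl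
  have hΓnum : Real.Gamma ((↑(n + 1) : ℝ) + a) =
      Real.Gamma b * ∏ i ∈ Finset.range n, (b + i) := by
    rw [show ((↑(n + 1) : ℝ) + a) = b + n by push_cast; ring]
    exact gamma_add_nat' b hb0 n
  have hΓden : Real.Gamma (↑(n + 1) : ℝ) = (n.factorial : ℝ) := by
    rw [show ((↑(n+1):ℝ)) = (n : ℝ) + 1 by push_cast; ring]
    exact_mod_cast Real.Gamma_nat_eq_factorial n
  have hnb : (n : ℝ) ^ b = (n : ℝ) ^ a * n := by
    rw [hb, Real.rpow_add hn0, Real.rpow_one]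
  have hdiv : ((n : ℝ) / ((n : ℝ) + 1)) ^ a = (n : ℝ) ^ a / ((n : ℝ) + 1) ^ a :=
    Real.div_rpow hn0.le (by positivity : (0:ℝ) ≤ (n:ℝ) + 1) a
  have hsucc : ((↑(n + 1) : ℝ)) = (n : ℝ) + 1 := by push_cast; ring
  have hprodsplit : ∏ j ∈ Finset.range (n + 1), (b + j) =
      (∏ j ∈ Finset.range n, (b + j)) * (b + n) := Finset.prod_range_succ _ _
  have hprodpos' : (0 : ℝ) < ∏ j ∈ Finset.range n, (b + j) := by
    apply Finset.prod_pos; intro j _; positivity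
  have hna : (0 : ℝ) < (n : ℝ) ^ a := Real.rpow_pos_of_pos hn0 a
  have hn1a : (0 : ℝ) < ((n : ℝ) + 1) ^ a := Real.rpow_pos_of_pos (by positivity) a
  have hbn : (0 : ℝ) < b + n := by positivity
  rw [hGS, hΓnum, hΓden, hsucc, hdiv, hnb, hprodsplit]
  field_simp
  ring

open Filter Real Topology in
/-- Stirling approximation for the two-parameter Poisson–Dirichlet EPPF weights:
for `α ∈ (0,1)`, `θ > -α`, `s > 0` and `k_n = ⌈s·n^α⌉`, the ratio of
`(θ+α)_{(k_n-1)↑α} / (θ+1)_{n-1}` to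
`(α^(k_n-1)·Γ(k_n)/Γ(n)) · (Γ(θ+1)/Γ(θ/α+1)) · (k_n/n^α)^(θ/α)` tends to `1`. -/
theorem stirling_PD_weights (α θ s : ℝ) (hα : α ∈ Set.Ioo (0:ℝ) 1)
    (hθ : θ > -α) (hs : 0 < s) :
    Filter.Tendsto
      (fun n : ℕ =>
        (genRisingFactorial (θ + α) α (⌈s * (n : ℝ) ^ α⌉₊ - 1) /
            risingFactorial (θ + 1) (n - 1)) /
          ((α ^ (⌈s * (n : ℝ) ^ α⌉₊ - 1) * Real.Gamma (⌈s * (n : ℝ) ^ α⌉₊) /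
              Real.Gamma n) *
            (Real.Gamma (θ + 1) / Real.Gamma (θ / α + 1)) *
            ((⌈s * (n : ℝ) ^ α⌉₊ : ℝ) / (n : ℝ) ^ α) ^ (θ / α)))
      Filter.atTop (nhds 1) := by
  obtain ⟨hα0, hα1⟩ := hα
  have hθ1 : (0:ℝ) < θ + 1 := by linarith
  have hθα : (-1:ℝ) < θ / α := by
    rw [neg_lt, ← neg_div, div_lt_one hα0]; linarith
  have hθα1 : (0:ℝ) < θ / α + 1 := by linarith
  set k : ℕ → ℕ := fun n => ⌈s * (n : ℝ) ^ α⌉₊ with hkdef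
  have hsn : Tendsto (fun n : ℕ => s * (n:ℝ)^α) atTop atTop := by
    apply Tendsto.const_mul_atTop hs
    exact (tendsto_rpow_atTop hα0).comp tendsto_natCast_atTop_atTop
  have hkT : Tendsto k atTop atTop := tendsto_nat_ceil_atTop.comp hsn
  have limA := (key_gamma_ratio (θ/α) hθα).comp hkT
  have limB' : Tendsto (fun n : ℕ =>
      (Real.Gamma ((n:ℝ) + θ) / (Real.Gamma n * (n:ℝ)^θ))⁻¹) atTop (𝓝 1) := by
    have := (key_gamma_ratio θ (by linarith)).inv₀ one_ne_zero
    simpa using this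
  have hcomb := limA.mul limB'
  rw [mul_one] at hcomb
  refine hcomb.congr' ?_
  filter_upwards [eventually_ge_atTop 1, hkT.eventually_ge_atTop 1] with n hn hkn
  set K : ℕ := k n with hK
  have hn0 : (0:ℝ) < n := by exact_mod_cast hn
  have hK0 : (0:ℝ) < K := by exact_mod_cast hkn
  have hcastK : ((K - 1 : ℕ) : ℝ) = (K:ℝ) - 1 := by
    push_cast [Nat.cast_sub hkn]; ring
  have hcastn : ((n - 1 : ℕ) : ℝ) = (n:ℝ) - 1 := by
    push_cast [Nat.cast_sub hn]; ring
  -- positivity facts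
  have hΓθα1 : 0 < Real.Gamma (θ/α + 1) := Real.Gamma_pos_of_pos hθα1
  have hΓθ1 : 0 < Real.Gamma (θ + 1) := Real.Gamma_pos_of_pos hθ1
  have hΓK : 0 < Real.Gamma K := Real.Gamma_pos_of_pos hK0
  have hΓn : 0 < Real.Gamma n := Real.Gamma_pos_of_pos hn0
  have hΓKa : 0 < Real.Gamma ((K:ℝ) + θ/α) := Real.Gamma_pos_of_pos (by nlinarith)
  have hΓnθ : 0 < Real.Gamma ((n:ℝ) + θ) := Real.Gamma_pos_of_pos (by nlinarith)
  have hKp : (0:ℝ) < (K:ℝ) ^ (θ/α) := Real.rpow_pos_of_pos hK0 _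
  have hnp : (0:ℝ) < (n:ℝ) ^ θ := Real.rpow_pos_of_pos hn0 _
  have hαp : (0:ℝ) < α ^ (K - 1) := by positivity
  -- identity for genRisingFactorial
  have hgen : genRisingFactorial (θ + α) α (K - 1)
      = α ^ (K - 1) * (Real.Gamma ((K:ℝ) + θ/α) / Real.Gamma (θ/α + 1)) := by
    unfold genRisingFactorial
    have h1 : ∀ i ∈ Finset.range (K - 1), θ + α + (i:ℝ) * α = α * ((θ/α + 1) + i) := by
      intro i _; field_simp
    rw [Finset.prod_congr rfl h1, Finset.prod_mul_distrib, Finset.prod_const,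
      Finset.card_range]
    have h2 := gamma_add_nat' (θ/α + 1) hθα1 (K - 1)
    rw [show θ/α + 1 + ((K-1:ℕ):ℝ) = (K:ℝ) + θ/α by rw [hcastK]; ring] at h2
    rw [h2, mul_comm (Real.Gamma (θ/α+1)), mul_div_assoc, div_self hΓθα1.ne', mul_one]
  have hris : risingFactorial (θ + 1) (n - 1)
      = Real.Gamma ((n:ℝ) + θ) / Real.Gamma (θ + 1) := by
    unfold risingFactorial
    have h2 := gamma_add_nat' (θ + 1) hθ1 (n - 1)
    rw [show θ + 1 + ((n-1:ℕ):ℝ) = (n:ℝ) + θ by rw [hcastn]; ring] at h2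
    rw [h2, mul_comm (Real.Gamma (θ+1)), mul_div_assoc, div_self hΓθ1.ne', mul_one]
  have hrpow : ((K:ℝ) / (n:ℝ)^α) ^ (θ/α) = (K:ℝ)^(θ/α) / (n:ℝ)^θ := by
    rw [Real.div_rpow hK0.le (Real.rpow_nonneg (Nat.cast_nonneg n) α) _,
      ← Real.rpow_mul (Nat.cast_nonneg n)]
    rw [show α * (θ/α) = θ by field_simp]
  show _ = _
  simp only [Function.comp_apply, ← hkdef, ← hK]
  rw [hgen, hris, hrpow]
  set G1 := Real.Gamma ((K:ℝ) + θ/α)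
  set G2 := Real.Gamma (K:ℝ)
  set G3 := Real.Gamma (n:ℝ)
  set G4 := Real.Gamma ((n:ℝ) + θ)
  set G5 := Real.Gamma (θ + 1)
  set G6 := Real.Gamma (θ/α + 1)
  set P := (K:ℝ) ^ (θ/α)
  set Q := (n:ℝ) ^ θ
  set A := α ^ (K - 1)
  field_simp
end

section
/- Generalized Stirling numbers as partial Bell polynomials: let α ∈ (0,1) and let n, k be integers with 1 ≤ k ≤ n. Then (n!/k!) · Σ_{(n_1,…,n_k)} Π_{j=1}^{k} (1-α)_{n_j - 1} / n_j! = (1/(α^k · k!)) · Σ_{j=1}^{k} (-1)^j · C(k, j) · (-jα)_n, where the left sum ranges over all compositions (n_1, …, n_k) of n into k positive integer parts (ordered tuples with n_j ≥ 1 and n_1 + ⋯ + n_k = n). -/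
lemma risingFactorial_succ (x : ℝ) (n : ℕ) :
    risingFactorial x (n+1) = risingFactorial x n * (x + n) :=
  Finset.prod_range_succ _ _

lemma risingFactorial_succ' (x : ℝ) (n : ℕ) :
    risingFactorial x (n+1) = x * risingFactorial (x+1) n := by
  rw [risingFactorial, Finset.prod_range_succ']
  simp only [Nat.cast_zero, add_zero]
  rw [mul_comm, risingFactorial]
  congr 1
  refine Finset.prod_congr rfl fun i _ => ?_
  push_cast; ring

lemma risingFactorial_of_zero {n : ℕ} (hn : n ≠ 0) : risingFactorial 0 n = 0 := by
  obtain ⟨m, rfl⟩ := Nat.exists_eq_succ_of_ne_zero hn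
  rw [risingFactorial_succ', zero_mul]

lemma risingFactorial_eq_descPochhammer (x : ℝ) (n : ℕ) :
    risingFactorial x n = (-1)^n * Polynomial.smeval (descPochhammer ℤ n) (-x) := by
  induction n with
  | zero => simp [risingFactorial, descPochhammer_zero, Polynomial.smeval_one]
  | succ n ih =>
    rw [risingFactorial_succ, ih, descPochhammer_succ_right, Polynomial.smeval_mul,
      Polynomial.smeval_sub, Polynomial.smeval_X, Polynomial.smeval_natCast]
    ring

/-- Chu–Vandermonde identity for rising factorials. -/
lemma risingFactorial_add_eq (x y : ℝ) (n : ℕ) :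
    risingFactorial (x + y) n =
      ∑ ij ∈ Finset.HasAntidiagonal.antidiagonal n, (n.choose ij.1 : ℝ) *
        (risingFactorial x ij.1 * risingFactorial y ij.2) := by
  have h := Ring.descPochhammer_smeval_add (R := ℝ) (r := -x) (s := -y) n (Commute.all _ _)
  rw [risingFactorial_eq_descPochhammer, neg_add, h, Finset.mul_sum]
  refine Finset.sum_congr rfl fun ij hij => ?_
  have hsum : ij.1 + ij.2 = n := Finset.HasAntidiagonal.mem_antidiagonal.mp hij
  rw [risingFactorial_eq_descPochhammer x, risingFactorial_eq_descPochhammer y, ← hsum, pow_add]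
  ring

/-- The binomial power series `(1-X)^{-c}` (formally), with coefficients `(c)_m / m!`. -/
noncomputable def rfSeries (c : ℝ) : PowerSeries ℝ :=
  PowerSeries.mk fun m => risingFactorial c m / m.factorial

lemma coeff_rfSeries (c : ℝ) (m : ℕ) :
    (PowerSeries.coeff m) (rfSeries c) = risingFactorial c m / m.factorial :=
  PowerSeries.coeff_mk _ _

lemma rfSeries_zero : rfSeries 0 = 1 := by
  ext m
  rw [coeff_rfSeries, PowerSeries.coeff_one]
  rcases m with _ | m
  · simp [risingFactorial]
  · simp [risingFactorial_of_zero (Nat.succ_ne_zero m)]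

lemma rfSeries_mul (c d : ℝ) : rfSeries c * rfSeries d = rfSeries (c + d) := by
  ext m
  rw [PowerSeries.coeff_mul, coeff_rfSeries, risingFactorial_add_eq, Finset.sum_div]
  refine Finset.sum_congr rfl fun ij hij => ?_
  have hsum : ij.1 + ij.2 = m := Finset.HasAntidiagonal.mem_antidiagonal.mp hij
  rw [coeff_rfSeries, coeff_rfSeries]
  have hfac : (m.factorial : ℝ) = (m.choose ij.1) * ij.1.factorial * ij.2.factorial := by
    rw [Nat.choose_symm_of_eq_add hsum.symm, ← hsum]
    exact_mod_cast (Nat.add_choose_mul_factorial_mul_factorial ij.1 ij.2).symm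
  have h1 : (ij.1.factorial : ℝ) ≠ 0 := Nat.cast_ne_zero.mpr (Nat.factorial_ne_zero _)
  have h2 : (ij.2.factorial : ℝ) ≠ 0 := Nat.cast_ne_zero.mpr (Nat.factorial_ne_zero _)
  have hC : (m.choose ij.1 : ℝ) ≠ 0 := by
    have h : ij.1 ≤ m := by omega
    exact_mod_cast (Nat.choose_pos h).ne'
  rw [hfac]
  field_simp

lemma rfSeries_pow (c : ℝ) (j : ℕ) : rfSeries c ^ j = rfSeries (j * c) := by
  induction j with
  | zero => simp [rfSeries_zero]
  | succ j ih =>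
    rw [pow_succ, ih, rfSeries_mul]
    push_cast; ring_nf

/-- Coefficients of powers of a power series as sums over compositions. -/
lemma coeff_mk_pow (c : ℕ → ℝ) (k : ℕ) : ∀ n, PowerSeries.coeff n ((PowerSeries.mk c) ^ k)
    = ∑ f ∈ Finset.Nat.antidiagonalTuple k n, ∏ j, c (f j) := by
  induction k with
  | zero =>
    intro n
    rcases n with _ | n
    · simp [Finset.Nat.antidiagonalTuple_zero_zero]
    · simp [Finset.Nat.antidiagonalTuple_zero_succ, PowerSeries.coeff_one]
  | succ k ih =>
    intro n
    rw [pow_succ', PowerSeries.coeff_mul]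
    simp_rw [PowerSeries.coeff_mk, ih, Finset.mul_sum]
    rw [Finset.sum_sigma']
    refine Finset.sum_nbij' (fun x => Fin.cons x.1.1 x.2)
      (fun f => ⟨(f 0, ∑ j : Fin k, f j.succ), Fin.tail f⟩) ?_ ?_ ?_ ?_ ?_
    · rintro ⟨⟨a, b⟩, f⟩ hx
      rw [Finset.mem_sigma] at hx
      obtain ⟨h1, h2⟩ := hx
      rw [Finset.HasAntidiagonal.mem_antidiagonal] at h1
      rw [Finset.Nat.mem_antidiagonalTuple] at h2 ⊢
      rw [Fin.sum_univ_succ]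
      simp only [Fin.cons_zero, Fin.cons_succ]
      rw [h2, h1]
    · intro f hf
      rw [Finset.Nat.mem_antidiagonalTuple] at hf
      rw [Finset.mem_sigma, Finset.HasAntidiagonal.mem_antidiagonal, Finset.Nat.mem_antidiagonalTuple]
      constructor
      · rw [← hf, Fin.sum_univ_succ]
      · rfl
    · rintro ⟨⟨a, b⟩, f⟩ hx
      rw [Finset.mem_sigma] at hx
      have h2 := Finset.Nat.mem_antidiagonalTuple.mp hx.2
      simp only [Fin.cons_zero, Fin.cons_succ, Fin.tail_cons]
      congr 1
      rw [h2]
    · intro f hf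
      exact Fin.cons_self_tail f
    · rintro ⟨⟨a, b⟩, f⟩ hx
      rw [Fin.prod_univ_succ]
      simp only [Fin.cons_zero, Fin.cons_succ]

/-- Generalized Stirling numbers as partial Bell polynomials: for `α ∈ (0,1)` and
integers `1 ≤ k ≤ n`,
`(n!/k!) Σ_{(n_1,…,n_k)} Π_j (1-α)_{n_j-1}/n_j! = (1/(α^k k!)) Σ_{j=1}^k (-1)^j C(k,j)(-jα)_n`,
the left sum ranging over all compositions of `n` into `k` positive parts. -/
theorem bell_polynomial_eq_toscano (α : ℝ) (hα : α ∈ Set.Ioo (0:ℝ) 1)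
    (n k : ℕ) (h1 : 1 ≤ k) (h2 : k ≤ n) :
    (Nat.factorial n : ℝ) / (Nat.factorial k : ℝ) *
        ∑ f ∈ (Finset.Nat.antidiagonalTuple k n).filter (fun f => ∀ j, 1 ≤ f j),
          ∏ j, risingFactorial (1 - α) (f j - 1) / (Nat.factorial (f j) : ℝ) =
      (1 / (α ^ k * (Nat.factorial k : ℝ))) *
        ∑ j ∈ Finset.Icc 1 k,
          (-1 : ℝ) ^ j * (k.choose j : ℝ) * risingFactorial (-(j : ℝ) * α) n := by
  obtain ⟨hα0, hα1⟩ := hα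
  have hn : n ≠ 0 := by omega
  set c : ℕ → ℝ := fun m => if m = 0 then 0 else
    α * (risingFactorial (1-α) (m-1) / m.factorial) with hc
  -- F = 1 - rfSeries (-α) equals mk c
  have hF : (1 : PowerSeries ℝ) - rfSeries (-α) = PowerSeries.mk c := by
    ext m
    rw [map_sub, coeff_rfSeries, PowerSeries.coeff_mk, PowerSeries.coeff_one]
    rcases m with _ | m
    · simp [risingFactorial, hc]
    · rw [risingFactorial_succ', neg_add_eq_sub]
      simp only [hc, Nat.succ_ne_zero, if_neg, if_false, Nat.add_sub_cancel]
      ring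
  -- binomial expansion
  have hsub : ((1 : PowerSeries ℝ) - rfSeries (-α)) ^ k = ∑ j ∈ Finset.range (k+1),
      PowerSeries.C (R := ℝ) ((-1)^j * (k.choose j)) * rfSeries (-(j:ℝ) * α) := by
    rw [sub_eq_add_neg, add_comm, add_pow]
    refine Finset.sum_congr rfl fun j hj => ?_
    rw [one_pow, neg_pow, rfSeries_pow, map_mul, map_pow, map_neg, map_one, map_natCast,
      mul_neg, neg_mul]
    ring
  -- E1 : coeff of LHS
  have E1 : PowerSeries.coeff n (((1 : PowerSeries ℝ) - rfSeries (-α)) ^ k) =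
      (∑ j ∈ Finset.Icc 1 k,
        (-1 : ℝ) ^ j * (k.choose j : ℝ) * risingFactorial (-(j : ℝ) * α) n) / n.factorial := by
    rw [hsub, map_sum]
    have hrange : Finset.range (k+1) = insert 0 (Finset.Icc 1 k) := by
      ext x; simp only [Finset.mem_range, Finset.mem_insert, Finset.mem_Icc]; omega
    rw [hrange, Finset.sum_insert (by simp)]
    have hzero : (PowerSeries.coeff n) (PowerSeries.C (R := ℝ) ((-1)^0 * (k.choose 0)) *
        rfSeries (-(0:ℕ) * α)) = 0 := by
      rw [PowerSeries.coeff_C_mul, coeff_rfSeries]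
      norm_num
      rw [risingFactorial_of_zero hn]
      simp
    rw [hzero, zero_add, Finset.sum_div]
    refine Finset.sum_congr rfl fun j hj => ?_
    rw [PowerSeries.coeff_C_mul, coeff_rfSeries]
    ring
  -- E2 : coeff of mk c ^ k
  have E2 : PowerSeries.coeff n ((PowerSeries.mk c) ^ k) =
      α ^ k * ∑ f ∈ (Finset.Nat.antidiagonalTuple k n).filter (fun f => ∀ j, 1 ≤ f j),
        ∏ j, risingFactorial (1 - α) (f j - 1) / (Nat.factorial (f j) : ℝ) := by
    rw [coeff_mk_pow]
    have hne : ∀ f ∈ Finset.Nat.antidiagonalTuple k n,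
        (∏ j, c (f j)) ≠ 0 → ∀ j, 1 ≤ f j := by
      intro f _ hprod j
      by_contra hj
      have hfj : f j = 0 := by omega
      exact hprod (Finset.prod_eq_zero (Finset.mem_univ j) (by rw [hfj]; simp [hc]))
    rw [← Finset.sum_filter_of_ne hne, Finset.mul_sum]
    refine Finset.sum_congr rfl fun f hf => ?_
    have hf1 : ∀ j, 1 ≤ f j := (Finset.mem_filter.mp hf).2
    calc ∏ j, c (f j)
        = ∏ j : Fin k, α * (risingFactorial (1-α) (f j - 1) / (Nat.factorial (f j) : ℝ)) := by
          refine Finset.prod_congr rfl fun j _ => ?_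
          simp only [hc]
          rw [if_neg (by have := hf1 j; omega)]
      _ = α ^ k * ∏ j, risingFactorial (1-α) (f j - 1) / (Nat.factorial (f j) : ℝ) := by
          rw [Finset.prod_mul_distrib, Finset.prod_const, Finset.card_univ, Fintype.card_fin]
  rw [hF] at E1
  rw [E2] at E1
  have hn0 : (n.factorial : ℝ) ≠ 0 := Nat.cast_ne_zero.mpr (Nat.factorial_ne_zero _)
  have hk0 : (k.factorial : ℝ) ≠ 0 := Nat.cast_ne_zero.mpr (Nat.factorial_ne_zero _)
  have hαk : α ^ k ≠ 0 := pow_ne_zero _ (ne_of_gt hα0)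
  rw [eq_div_iff hn0] at E1
  rw [one_div, mul_comm ((α ^ k * (Nat.factorial k : ℝ))⁻¹), ← div_eq_mul_inv,
    div_mul_eq_mul_div, div_eq_div_iff hk0 (mul_ne_zero hαk hk0)]
  linear_combination (k.factorial : ℝ) * E1
end

section
/- Expansion of rising factorials in generalized rising factorials with explicit Toscano coefficients: let α be a nonzero real number and n ≥ 1 an integer. Then for every real x, (x)_n = Σ_{k=1}^{n} [ (1/(α^k · k!)) · Σ_{j=1}^{k} (-1)^j · C(k, j) · (-jα)_n ] · (x)_{k↑α}. -/
open Finset Polynomial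

private lemma toscanoAltSum (N : ℕ) :
    ∑ i ∈ range (N + 1), (-1 : ℝ) ^ i * (N.choose i : ℝ) = if N = 0 then 1 else 0 := by
  have h := Int.alternating_sum_range_choose (n := N)
  have h2 : ((∑ m ∈ range (N + 1), ((-1) ^ m * N.choose m : ℤ) : ℤ) : ℝ)
      = ∑ i ∈ range (N + 1), (-1 : ℝ) ^ i * (N.choose i : ℝ) := by
    push_cast
    exact Finset.sum_congr rfl fun i _ => by ring
  rw [← h2, h]
  split <;> simp

private lemma toscanoInnerSum {m j n : ℕ} (hm : m ≤ n) (hjn : j ≤ n) :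
    ∑ k ∈ Finset.Icc j n, (-1 : ℝ) ^ k * (m.choose k : ℝ) * (k.choose j : ℝ)
      = if j = m then (-1 : ℝ) ^ m else 0 := by
  by_cases hjm : j ≤ m
  · -- first restrict the sum to Icc j m
    have hsub : Finset.Icc j m ⊆ Finset.Icc j n := Finset.Icc_subset_Icc_right hm
    rw [← Finset.sum_subset hsub (by
      intro k hk hk'
      simp only [Finset.mem_Icc] at hk hk'
      have : m < k := by omega
      rw [Nat.choose_eq_zero_of_lt this]
      simp)]
    have key : ∀ k ∈ Finset.Icc j m, (-1 : ℝ) ^ k * (m.choose k : ℝ) * (k.choose j : ℝ)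
        = (m.choose j : ℝ) * ((-1 : ℝ) ^ k * ((m - j).choose (k - j) : ℝ)) := by
      intro k hk
      rw [Finset.mem_Icc] at hk
      have h2 : (m.choose k : ℝ) * (k.choose j : ℝ)
          = (m.choose j : ℝ) * ((m - j).choose (k - j) : ℝ) := by
        exact_mod_cast congrArg (Nat.cast : ℕ → ℝ) (Nat.choose_mul (n := m) hk.1)
      rw [mul_assoc, h2]; ring
    rw [Finset.sum_congr rfl key, ← Finset.mul_sum]
    have hre : ∑ k ∈ Finset.Icc j m, (-1 : ℝ) ^ k * ((m - j).choose (k - j) : ℝ)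
        = (-1 : ℝ) ^ j * ∑ t ∈ range (m - j + 1), (-1 : ℝ) ^ t * ((m - j).choose t : ℝ) := by
      rw [← Finset.Ico_add_one_right_eq_Icc, Finset.sum_Ico_eq_sum_range, Finset.mul_sum]
      have he : m + 1 - j = m - j + 1 := by omega
      rw [he]
      refine Finset.sum_congr rfl fun t _ => ?_
      have h1 : j + t - j = t := by omega
      rw [h1, pow_add]; ring
    rw [hre, toscanoAltSum]
    by_cases h : j = m
    · subst h; simp
    · rw [if_neg (by omega), if_neg h]; ring
  · -- j > m : all terms vanish
    rw [if_neg (by omega)]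
    apply Finset.sum_eq_zero
    intro k hk
    rw [Finset.mem_Icc] at hk
    rw [Nat.choose_eq_zero_of_lt (by omega)]
    simp

private lemma toscanoGenRFEval (α : ℝ) (m k : ℕ) :
    genRisingFactorial (-(m : ℝ) * α) α k
      = (-1 : ℝ) ^ k * (m.descFactorial k : ℝ) * α ^ k := by
  induction k with
  | zero => simp [genRisingFactorial]
  | succ k ih =>
    rw [genRisingFactorial, Finset.prod_range_succ, ← genRisingFactorial, ih,
      Nat.descFactorial_succ]
    rcases lt_trichotomy k m with h | h | h
    · have hc : ((m - k : ℕ) : ℝ) = (m : ℝ) - k := by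
        rw [Nat.cast_sub h.le]
      push_cast [hc]
      ring
    · subst h
      have hz : -(k : ℝ) * α + (k : ℝ) * α = 0 := by ring
      rw [hz]
      simp
    · rw [Nat.descFactorial_eq_zero_iff_lt.2 h]
      push_cast
      ring

private lemma toscanoRFZero {n : ℕ} (hn : 1 ≤ n) : risingFactorial 0 n = 0 := by
  rw [risingFactorial]
  apply Finset.prod_eq_zero (Finset.mem_range.2 (by omega) : 0 ∈ range n)
  simp

private lemma toscanoEvalKey (α : ℝ) (hα : α ≠ 0) (n : ℕ) (hn : 1 ≤ n) (m : ℕ) (hm : m ≤ n) :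
    risingFactorial (-(m : ℝ) * α) n =
      ∑ k ∈ Finset.Icc 1 n,
        ((1 / (α ^ k * (Nat.factorial k : ℝ))) *
            ∑ j ∈ Finset.Icc 1 k,
              (-1 : ℝ) ^ j * (k.choose j : ℝ) * risingFactorial (-(j : ℝ) * α) n) *
          genRisingFactorial (-(m : ℝ) * α) α k := by
  set f : ℕ → ℝ := fun j => risingFactorial (-(j : ℝ) * α) n with hf
  have step1 : ∀ k ∈ Finset.Icc 1 n,
      ((1 / (α ^ k * (Nat.factorial k : ℝ))) *
          ∑ j ∈ Finset.Icc 1 k, (-1 : ℝ) ^ j * (k.choose j : ℝ) * f j) *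
        genRisingFactorial (-(m : ℝ) * α) α k
      = ∑ j ∈ Finset.Icc 1 k,
          ((-1 : ℝ) ^ k * (m.choose k : ℝ) * ((-1 : ℝ) ^ j * (k.choose j : ℝ) * f j)) := by
    intro k _
    rw [toscanoGenRFEval, Finset.mul_sum, Finset.sum_mul]
    refine Finset.sum_congr rfl fun j _ => ?_
    have hd : (m.descFactorial k : ℝ) = (Nat.factorial k : ℝ) * (m.choose k : ℝ) := by
      exact_mod_cast congrArg (Nat.cast : ℕ → ℝ) (Nat.descFactorial_eq_factorial_mul_choose m k)
    have hαk : α ^ k ≠ 0 := pow_ne_zero _ hα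
    have hfk : (Nat.factorial k : ℝ) ≠ 0 := Nat.cast_ne_zero.2 (Nat.factorial_ne_zero k)
    field_simp [hd]
    rw [hd]; ring
  rw [Finset.sum_congr rfl step1]
  rw [Finset.sum_comm' (s := Finset.Icc 1 n) (t := fun k => Finset.Icc 1 k)
    (t' := Finset.Icc 1 n) (s' := fun j => Finset.Icc j n)
    (by intro k j; simp only [Finset.mem_Icc]; omega)]
  have step2 : ∀ j ∈ Finset.Icc 1 n,
      ∑ k ∈ Finset.Icc j n,
          ((-1 : ℝ) ^ k * (m.choose k : ℝ) * ((-1 : ℝ) ^ j * (k.choose j : ℝ) * f j))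
      = if j = m then f m else 0 := by
    intro j hj
    rw [Finset.mem_Icc] at hj
    have : ∀ k ∈ Finset.Icc j n,
        (-1 : ℝ) ^ k * (m.choose k : ℝ) * ((-1 : ℝ) ^ j * (k.choose j : ℝ) * f j)
        = ((-1 : ℝ) ^ j * f j) * ((-1 : ℝ) ^ k * (m.choose k : ℝ) * (k.choose j : ℝ)) := by
      intro k _; ring
    rw [Finset.sum_congr rfl this, ← Finset.mul_sum, toscanoInnerSum hm hj.2]
    by_cases h : j = m
    · subst h; rw [if_pos rfl, if_pos rfl]
      have hone : (-1 : ℝ) ^ j * (-1 : ℝ) ^ j = 1 := by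
        rw [← pow_add, ← two_mul, pow_mul]; norm_num
      calc (-1 : ℝ) ^ j * f j * (-1 : ℝ) ^ j
          = ((-1 : ℝ) ^ j * (-1 : ℝ) ^ j) * f j := by ring
        _ = f j := by rw [hone, one_mul]
    · rw [if_neg h, if_neg h, mul_zero]
  rw [Finset.sum_congr rfl step2, Finset.sum_ite_eq' (Finset.Icc 1 n) m (fun _ => f m)]
  by_cases hm1 : 1 ≤ m
  · rw [if_pos (Finset.mem_Icc.2 ⟨hm1, hm⟩)]
  · have : m = 0 := by omega
    subst this
    rw [if_neg (by simp)]
    simpa using toscanoRFZero hn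

/-- Expansion of rising factorials in generalized rising factorials with the explicit
Toscano coefficients: for `α ≠ 0`, `n ≥ 1` and every real `x`,
`(x)_n = Σ_{k=1}^n [ (1/(α^k k!)) Σ_{j=1}^k (-1)^j C(k,j)(-jα)_n ] (x)_{k↑α}`. -/
theorem risingFactorial_expansion_toscano (α : ℝ) (hα : α ≠ 0) (n : ℕ) (hn : 1 ≤ n)
    (x : ℝ) :
    risingFactorial x n =
      ∑ k ∈ Finset.Icc 1 n,
        ((1 / (α ^ k * (Nat.factorial k : ℝ))) *
            ∑ j ∈ Finset.Icc 1 k,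
              (-1 : ℝ) ^ j * (k.choose j : ℝ) * risingFactorial (-(j : ℝ) * α) n) *
          genRisingFactorial x α k := by
  set c : ℕ → ℝ := fun k =>
    (1 / (α ^ k * (Nat.factorial k : ℝ))) *
      ∑ j ∈ Finset.Icc 1 k,
        (-1 : ℝ) ^ j * (k.choose j : ℝ) * risingFactorial (-(j : ℝ) * α) n with hc
  set Q : Polynomial ℝ :=
    (∏ i ∈ range n, (X + C (i : ℝ))) -
      ∑ k ∈ Finset.Icc 1 n, C (c k) * ∏ i ∈ range k, (X + C ((i : ℝ) * α)) with hQ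
  have hevalR : ∀ y : ℝ, (∏ i ∈ range n, (X + C (i : ℝ))).eval y = risingFactorial y n := by
    intro y; rw [risingFactorial]; simp [eval_prod]
  have hevalG : ∀ (y : ℝ) (k : ℕ),
      (∏ i ∈ range k, (X + C ((i : ℝ) * α))).eval y = genRisingFactorial y α k := by
    intro y k; rw [genRisingFactorial]; simp [eval_prod]
  have hQeval : ∀ y : ℝ, Q.eval y =
      risingFactorial y n - ∑ k ∈ Finset.Icc 1 n, c k * genRisingFactorial y α k := by
    intro y
    simp only [hQ, eval_sub, eval_finset_sum, eval_mul, eval_C, hevalR, hevalG]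
  have hQdeg : Q.natDegree ≤ n := by
    apply le_trans (natDegree_sub_le _ _)
    apply max_le
    · apply le_trans (natDegree_prod_le _ _)
      apply le_trans (Finset.sum_le_card_nsmul _ _ 1 (fun i _ => le_of_eq (natDegree_X_add_C _)))
      simp
    · apply natDegree_sum_le_of_forall_le
      intro k hk
      rw [Finset.mem_Icc] at hk
      apply le_trans (natDegree_mul_le)
      rw [natDegree_C, zero_add]
      apply le_trans (natDegree_prod_le _ _)
      apply le_trans (Finset.sum_le_card_nsmul _ _ 1 (fun i _ => le_of_eq (natDegree_X_add_C _)))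
      simpa using hk.2
  have hroots : ∀ m ∈ range (n + 1), Q.eval (-(m : ℝ) * α) = 0 := by
    intro m hm
    rw [Finset.mem_range] at hm
    rw [hQeval]
    rw [sub_eq_zero]
    exact toscanoEvalKey α hα n hn m (by omega)
  have hinj : Function.Injective (fun m : ℕ => -(m : ℝ) * α) := by
    intro a b hab
    simp only at hab
    have h := mul_right_cancel₀ hα hab
    exact_mod_cast neg_inj.mp h
  have hQ0 : Q = 0 := by
    apply Polynomial.eq_zero_of_natDegree_lt_card_of_eval_eq_zero' Q
      ((range (n + 1)).image (fun m : ℕ => -(m : ℝ) * α))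
    · intro y hy
      rw [Finset.mem_image] at hy
      obtain ⟨m, hm, rfl⟩ := hy
      exact hroots m hm
    · rw [Finset.card_image_of_injective _ hinj, Finset.card_range]
      omega
  have := hQeval x
  rw [hQ0] at this
  simp only [eval_zero] at this
  have h2 := sub_eq_zero.mp this.symm
  rw [h2]
end

section
/- Stirling approximation of the posterior Poisson–Dirichlet weights (Example 5, direct computation): let α ∈ (0,1), θ > -α, let n ≥ 1 and k ≥ 1 be fixed integers, let s > 0, and set k*_m = ⌈s·m^α⌉. Then, as m → ∞, the ratio of (θ+kα)_{k*_m↑α} / (θ+n)_m to α^{k*_m} · (k*_m)^{θ/α + k} · Γ(k*_m) · Γ(θ+n) / (Γ(m) · Γ(θ/α + k) · m^{θ+n}) tends to 1. -/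
lemma risingFactorial_pos {x : ℝ} (hx : 0 < x) (j : ℕ) : 0 < risingFactorial x j :=
  Finset.prod_pos fun i _ => by positivity

lemma Gamma_add_nat {x : ℝ} (hx : 0 < x) (j : ℕ) :
    Real.Gamma (x + j) = risingFactorial x j * Real.Gamma x := by
  induction j with
  | zero => simp [risingFactorial]
  | succ j ih =>
      have h : x + ((j : ℕ) + 1 : ℕ) = (x + j) + 1 := by push_cast; ring
      rw [h, Real.Gamma_add_one (by positivity), ih]
      simp only [risingFactorial, Finset.prod_range_succ]
      ring

lemma genRisingFactorial_eq {x α : ℝ} (hα : α ≠ 0) (j : ℕ) :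
    genRisingFactorial x α j = α ^ j * risingFactorial (x / α) j := by
  induction j with
  | zero => simp [genRisingFactorial, risingFactorial]
  | succ j ih =>
      simp only [genRisingFactorial, risingFactorial, Finset.prod_range_succ] at ih ⊢
      rw [ih]
      field_simp
      ring

lemma gamma_ratio_tendsto {c : ℝ} (hc : 0 < c) :
    Filter.Tendsto (fun j : ℕ => Real.Gamma (c + j) / ((j : ℝ) ^ c * Real.Gamma j))
      Filter.atTop (nhds 1) := by
  rw [← Filter.tendsto_add_atTop_iff_nat 1]
  have hGc : (0:ℝ) < Real.Gamma c := Real.Gamma_pos_of_pos hc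
  have h0 : Filter.Tendsto (fun N : ℕ => (N : ℝ) / ((N : ℝ) + 1)) Filter.atTop (nhds 1) := by
    simpa using tendsto_natCast_div_add_atTop (1 : ℝ)
  have hr : Filter.Tendsto (fun N : ℕ => ((N : ℝ) / ((N : ℝ) + 1)) ^ c)
      Filter.atTop (nhds 1) := by
    have h1 := h0.rpow_const (p := c) (Or.inl one_ne_zero)
    simpa using h1
  have hG := Real.GammaSeq_tendsto_Gamma c
  have hmain := (hr.mul (tendsto_const_nhds (x := Real.Gamma c))).div hG hGc.ne'
  have hlim : (1 * Real.Gamma c / Real.Gamma c : ℝ) = 1 := by field_simp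
  rw [hlim] at hmain
  refine hmain.congr' ?_
  filter_upwards [Filter.eventually_ge_atTop 1] with N hN
  have hN0 : (0:ℝ) < (N : ℝ) := by exact_mod_cast hN
  have hrf : 0 < risingFactorial c (N + 1) := risingFactorial_pos hc _
  have hseq : Real.GammaSeq c N = (N:ℝ) ^ c * (Nat.factorial N : ℝ) / risingFactorial c (N + 1) := rfl
  have hG1 : Real.Gamma (c + (N + 1 : ℕ)) = risingFactorial c (N + 1) * Real.Gamma c :=
    Gamma_add_nat hc (N + 1)
  have hG2 : Real.Gamma ((N + 1 : ℕ) : ℝ) = (Nat.factorial N : ℝ) := by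
    push_cast
    rw [Real.Gamma_nat_eq_factorial]
  simp only [Pi.div_apply]
  rw [hseq, hG1, hG2, Real.div_rpow hN0.le (by positivity)]
  have hfac : (0:ℝ) < (Nat.factorial N : ℝ) := by positivity
  have h1 : (0:ℝ) < (N:ℝ) ^ c := Real.rpow_pos_of_pos hN0 c
  have h2 : (0:ℝ) < ((N:ℝ) + 1) ^ c := Real.rpow_pos_of_pos (by positivity) c
  push_cast
  field_simp

/-- Stirling approximation of the posterior Poisson–Dirichlet weights: for `α ∈ (0,1)`,
`θ > -α`, fixed integers `n, k ≥ 1`, `s > 0` and `k*_m = ⌈s·m^α⌉`, the ratio of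
`(θ+kα)_{k*_m↑α} / (θ+n)_m` to
`α^{k*_m}·(k*_m)^{θ/α+k}·Γ(k*_m)·Γ(θ+n) / (Γ(m)·Γ(θ/α+k)·m^{θ+n})` tends to `1`. -/
theorem stirling_posterior_PD_weights (α θ s : ℝ) (hα : α ∈ Set.Ioo (0:ℝ) 1)
    (hθ : θ > -α) (n k : ℕ) (hn : 1 ≤ n) (hk : 1 ≤ k) (hs : 0 < s) :
    Filter.Tendsto
      (fun m : ℕ =>
        (genRisingFactorial (θ + k * α) α ⌈s * (m : ℝ) ^ α⌉₊ /
            risingFactorial (θ + n) m) /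
          (α ^ ⌈s * (m : ℝ) ^ α⌉₊ *
              (⌈s * (m : ℝ) ^ α⌉₊ : ℝ) ^ (θ / α + k) *
              Real.Gamma (⌈s * (m : ℝ) ^ α⌉₊) * Real.Gamma (θ + n) /
            (Real.Gamma m * Real.Gamma (θ / α + k) * (m : ℝ) ^ (θ + n))))
      Filter.atTop (nhds 1) := by
  obtain ⟨hα0, hα1⟩ := hα
  set c : ℝ := θ / α + k with hc_def
  set a : ℝ := θ + n with ha_def
  have hθα : (-1 : ℝ) < θ / α := by
    rw [lt_div_iff₀ hα0]; linarith
  have hc : 0 < c := by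
    have : (1:ℝ) ≤ k := by exact_mod_cast hk
    simp only [hc_def]; linarith
  have ha : 0 < a := by
    have : (1:ℝ) ≤ n := by exact_mod_cast hn
    simp only [ha_def]; linarith
  -- K m → atTop
  have hK : Filter.Tendsto (fun m : ℕ => ⌈s * (m : ℝ) ^ α⌉₊) Filter.atTop Filter.atTop := by
    have h1 : Filter.Tendsto (fun m : ℕ => s * (m : ℝ) ^ α) Filter.atTop Filter.atTop :=
      (Filter.Tendsto.const_mul_atTop hs
        ((tendsto_rpow_atTop hα0).comp tendsto_natCast_atTop_atTop))
    exact Filter.tendsto_atTop_mono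
      (fun m => Nat.floor_le_ceil _) (tendsto_nat_floor_atTop.comp h1)
  have hF : Filter.Tendsto
      (fun m : ℕ => Real.Gamma (c + (⌈s * (m : ℝ) ^ α⌉₊ : ℕ)) /
        ((⌈s * (m : ℝ) ^ α⌉₊ : ℝ) ^ c * Real.Gamma (⌈s * (m : ℝ) ^ α⌉₊ : ℕ)))
      Filter.atTop (nhds 1) := (gamma_ratio_tendsto hc).comp hK
  have hGm : Filter.Tendsto
      (fun m : ℕ => Real.Gamma (a + m) / ((m : ℝ) ^ a * Real.Gamma m))
      Filter.atTop (nhds 1) := gamma_ratio_tendsto ha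
  have hGm' : Filter.Tendsto
      (fun m : ℕ => ((m : ℝ) ^ a * Real.Gamma m) / Real.Gamma (a + m))
      Filter.atTop (nhds 1) := by
    have := hGm.inv₀ one_ne_zero
    simp only [inv_one] at this
    refine this.congr' ?_
    filter_upwards [Filter.eventually_ge_atTop 1] with m hm
    have hm0 : (0:ℝ) < (m:ℝ) := by exact_mod_cast hm
    rw [inv_div]
  have hmul := hF.mul hGm'
  rw [mul_one] at hmul
  refine hmul.congr' ?_
  filter_upwards [Filter.eventually_ge_atTop 1] with m hm
  set K : ℕ := ⌈s * (m : ℝ) ^ α⌉₊ with hK_def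
  have hm0 : (0:ℝ) < (m:ℝ) := by exact_mod_cast hm
  have hKpos : 0 < K := by
    rw [hK_def]
    exact Nat.ceil_pos.2 (by positivity)
  have hK0 : (0:ℝ) < (K:ℝ) := by exact_mod_cast hKpos
  -- rewrite everything
  have hgen : genRisingFactorial (θ + k * α) α K = α ^ K * (Real.Gamma (c + K) / Real.Gamma c) := by
    rw [genRisingFactorial_eq hα0.ne' K]
    have : (θ + k * α) / α = c := by rw [hc_def, add_div, mul_div_assoc, div_self hα0.ne', mul_one]
    rw [this]
    congr 1
    rw [Gamma_add_nat hc K]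
    field_simp [(Real.Gamma_pos_of_pos hc).ne']
  have hrf : risingFactorial a m = Real.Gamma (a + m) / Real.Gamma a := by
    rw [Gamma_add_nat ha m]
    field_simp [(Real.Gamma_pos_of_pos ha).ne']
  have hGc := Real.Gamma_pos_of_pos hc
  have hGa := Real.Gamma_pos_of_pos ha
  have hGK := Real.Gamma_pos_of_pos hK0
  have hGmpos := Real.Gamma_pos_of_pos hm0
  have hGam := Real.Gamma_pos_of_pos (by positivity : (0:ℝ) < a + m)
  have hGcK := Real.Gamma_pos_of_pos (by positivity : (0:ℝ) < c + K)
  have hαK : (0:ℝ) < α ^ K := by positivity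
  have hKc : (0:ℝ) < (K:ℝ) ^ c := Real.rpow_pos_of_pos hK0 c
  have hma : (0:ℝ) < (m:ℝ) ^ a := Real.rpow_pos_of_pos hm0 a
  show Real.Gamma (c + K) / ((K:ℝ) ^ c * Real.Gamma K) *
      ((m:ℝ) ^ a * Real.Gamma m / Real.Gamma (a + m)) =
    (genRisingFactorial (θ + k * α) α K / risingFactorial a m) /
      (α ^ K * (K:ℝ) ^ c * Real.Gamma K * Real.Gamma a /
        (Real.Gamma m * Real.Gamma c * (m:ℝ) ^ a))
  rw [hgen, hrf]
  field_simp
end
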